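/- There exists a constant C > 0 such that for every t ∈ ℝ and every j ∈ ℤ, the discrete Schrödinger kernel satisfies |K_t(j)| ≤ C (1+|t|)^{-1/3}. -/

import Mathlib

open Real MeasureTheory

/-- The discrete Schrödinger kernel
`K t j = (1/(2π)) ∫_{-π}^{π} e^{-4 i t sin²(ξ/2)} e^{i j ξ} dξ`. -/
noncomputable def schrodingerKernel (t : ℝ) (j : ℤ) : ℂ :=
  (1 / (2 * Real.pi)) * ∫ ξ in (-Real.pi)..Real.pi,
    Complex.exp (-4 * Complex.I * (t : ℂ) * ((Real.sin (ξ / 2) : ℂ)) ^ 2) *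
      Complex.exp (Complex.I * (j : ℂ) * (ξ : ℂ))

open Set intervalIntegral


lemma norm_exp_I_mul (x : ℝ) : ‖Complex.exp (Complex.I * x)‖ = 1 := by
  rw [Complex.norm_exp]
  simp

lemma triv_bound (φ : ℝ → ℝ) (a b : ℝ) (hab : a ≤ b) :
    ‖∫ x in a..b, Complex.exp (Complex.I * φ x)‖ ≤ b - a := by
  have := intervalIntegral.norm_integral_le_of_norm_le_const
    (f := fun x => Complex.exp (Complex.I * φ x)) (a := a) (b := b) (C := 1)
    (fun x _ => le_of_eq (norm_exp_I_mul (φ x)))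
  rwa [one_mul, abs_of_nonneg (by linarith)] at this

lemma interval_conj (f : ℝ → ℂ) (a b : ℝ) :
    ∫ x in a..b, (starRingEnd ℂ) (f x) = (starRingEnd ℂ) (∫ x in a..b, f x) := by
  simp only [intervalIntegral]
  rw [integral_conj, integral_conj, ← map_sub]

lemma vdc1 (φ φ' φ'' : ℝ → ℝ) (a b lam : ℝ) (hab : a ≤ b) (hlam : 0 < lam)
    (hd1 : ∀ x ∈ Icc a b, HasDerivAt φ (φ' x) x)
    (hd2 : ∀ x ∈ Icc a b, HasDerivAt φ' (φ'' x) x)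
    (hc2 : ContinuousOn φ'' (Icc a b))
    (hlow : ∀ x ∈ Icc a b, lam ≤ |φ' x|)
    (hsgn : (∀ x ∈ Icc a b, 0 ≤ φ'' x) ∨ (∀ x ∈ Icc a b, φ'' x ≤ 0)) :
    ‖∫ x in a..b, Complex.exp (Complex.I * φ x)‖ ≤ 4 / lam := by
  have huIcc : Set.uIcc a b = Icc a b := Set.uIcc_of_le hab
  have hne : ∀ x ∈ Icc a b, φ' x ≠ 0 := by
    intro x hx h
    have := hlow x hx
    rw [h, abs_zero] at this
    linarith
  have hc1 : ContinuousOn φ' (Icc a b) := fun x hx => ((hd2 x hx).continuousAt).continuousWithinAt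
  have hc0 : ContinuousOn φ (Icc a b) := fun x hx => ((hd1 x hx).continuousAt).continuousWithinAt
  set r : ℝ → ℝ := fun x => -φ'' x / (φ' x) ^ 2 with hr_def
  set u : ℝ → ℂ := fun x => -Complex.I * ((φ' x)⁻¹ : ℝ) with hu_def
  set v : ℝ → ℂ := fun x => Complex.exp (Complex.I * φ x) with hv_def
  set u' : ℝ → ℂ := fun x => -Complex.I * (r x : ℝ) with hu'_def
  set v' : ℝ → ℂ := fun x => Complex.I * φ' x * Complex.exp (Complex.I * φ x) with hv'_def
  have hgd : ∀ x ∈ Icc a b, HasDerivAt (fun y => (φ' y)⁻¹) (r x) x := by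
    intro x hx
    have := (hd2 x hx).inv (hne x hx)
    exact this
  have hdu : ∀ x ∈ Set.uIcc a b, HasDerivAt u (u' x) x := by
    intro x hx
    rw [huIcc] at hx
    exact ((hgd x hx).ofReal_comp).const_mul (-Complex.I)
  have hdv : ∀ x ∈ Set.uIcc a b, HasDerivAt v (v' x) x := by
    intro x hx
    rw [huIcc] at hx
    have h1 : HasDerivAt (fun y => Complex.I * (φ y : ℂ)) (Complex.I * φ' x) x :=
      ((hd1 x hx).ofReal_comp).const_mul Complex.I
    simpa [hv'_def, mul_comm] using h1.cexp
  have hcr : ContinuousOn r (Icc a b) := by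
    apply ContinuousOn.div (hc2.neg) (hc1.pow 2)
    intro x hx
    exact pow_ne_zero 2 (hne x hx)
  have hcu' : ContinuousOn u' (Icc a b) :=
    continuous_const.continuousOn.mul (Complex.continuous_ofReal.comp_continuousOn hcr)
  have hcv' : ContinuousOn v' (Icc a b) :=
    (continuous_const.continuousOn.mul
      (Complex.continuous_ofReal.comp_continuousOn hc1)).mul
      (Complex.continuous_exp.comp_continuousOn
        (continuous_const.continuousOn.mul (Complex.continuous_ofReal.comp_continuousOn hc0)))
  have hiu' : IntervalIntegrable u' volume a b := (hcu'.mono (by rw [huIcc])).intervalIntegrable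
  have hiv' : IntervalIntegrable v' volume a b := (hcv'.mono (by rw [huIcc])).intervalIntegrable
  have key : ∫ x in a..b, Complex.exp (Complex.I * φ x) = ∫ x in a..b, u x * v' x := by
    apply intervalIntegral.integral_congr
    intro x hx
    rw [huIcc] at hx
    have h2 : (φ' x : ℂ) ≠ 0 := Complex.ofReal_ne_zero.2 (hne x hx)
    simp only [hu_def, hv'_def]
    push_cast
    field_simp
    ring_nf
    rw [Complex.I_sq]
    ring
  have parts := intervalIntegral.integral_mul_deriv_eq_deriv_mul hdu hdv hiu' hiv'
  rw [key, parts]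
  have hbnd_u : ∀ x ∈ Icc a b, ‖u x‖ ≤ 1 / lam := by
    intro x hx
    have : ‖u x‖ = |φ' x|⁻¹ := by
      simp only [hu_def]
      rw [norm_mul]
      simp [abs_inv]
    rw [this, one_div]
    exact inv_anti₀ hlam (hlow x hx)
  have hnv : ∀ x, ‖v x‖ = 1 := fun x => norm_exp_I_mul (φ x)
  -- bound on the integral of u' * v
  have hir : IntervalIntegrable r volume a b := (hcr.mono (by rw [huIcc])).intervalIntegrable
  have hftc : ∫ x in a..b, r x = (φ' b)⁻¹ - (φ' a)⁻¹ := by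
    apply intervalIntegral.integral_eq_sub_of_hasDerivAt
    · intro x hx; rw [huIcc] at hx; exact hgd x hx
    · exact hir
  have habs_r : ∫ x in a..b, |r x| ≤ 2 / lam := by
    have hend : |(φ' b)⁻¹ - (φ' a)⁻¹| ≤ 2 / lam := by
      have h1 : |(φ' b)⁻¹| ≤ 1 / lam := by
        rw [abs_inv, one_div]
        exact inv_anti₀ hlam (hlow b ⟨hab, le_refl b⟩)
      have h2 : |(φ' a)⁻¹| ≤ 1 / lam := by
        rw [abs_inv, one_div]
        exact inv_anti₀ hlam (hlow a ⟨le_refl a, hab⟩)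
      calc |(φ' b)⁻¹ - (φ' a)⁻¹| ≤ |(φ' b)⁻¹| + |(φ' a)⁻¹| := abs_sub _ _
        _ ≤ 1 / lam + 1 / lam := add_le_add h1 h2
        _ = 2 / lam := by ring
    rcases hsgn with hpos | hneg
    · -- φ'' ≥ 0 so r ≤ 0, |r| = -r
      have : ∫ x in a..b, |r x| = -∫ x in a..b, r x := by
        rw [← intervalIntegral.integral_neg]
        apply intervalIntegral.integral_congr
        intro x hx
        rw [huIcc] at hx
        show |r x| = -r x
        rw [abs_of_nonpos]
        apply div_nonpos_of_nonpos_of_nonneg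
        · linarith [hpos x hx]
        · positivity
      rw [this, hftc]
      calc -((φ' b)⁻¹ - (φ' a)⁻¹) ≤ |(φ' b)⁻¹ - (φ' a)⁻¹| := neg_le_abs _
        _ ≤ 2 / lam := hend
    · have : ∫ x in a..b, |r x| = ∫ x in a..b, r x := by
        apply intervalIntegral.integral_congr
        intro x hx
        rw [huIcc] at hx
        show |r x| = r x
        rw [abs_of_nonneg]
        apply div_nonneg
        · linarith [hneg x hx]
        · positivity
      rw [this, hftc]
      calc (φ' b)⁻¹ - (φ' a)⁻¹ ≤ |(φ' b)⁻¹ - (φ' a)⁻¹| := le_abs_self _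
        _ ≤ 2 / lam := hend
  have hint : ‖∫ x in a..b, u' x * v x‖ ≤ 2 / lam := by
    calc ‖∫ x in a..b, u' x * v x‖ ≤ ∫ x in a..b, ‖u' x * v x‖ :=
          intervalIntegral.norm_integral_le_integral_norm hab
      _ = ∫ x in a..b, |r x| := by
          apply intervalIntegral.integral_congr
          intro x hx
          show ‖u' x * v x‖ = |r x|
          rw [norm_mul (u' x) (v x), hnv, mul_one]
          simp only [hu'_def]
          rw [norm_mul (-Complex.I) ((r x : ℝ) : ℂ)]
          simp
      _ ≤ 2 / lam := habs_r
  calc ‖u b * v b - u a * v a - ∫ x in a..b, u' x * v x‖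
      ≤ ‖u b * v b - u a * v a‖ + ‖∫ x in a..b, u' x * v x‖ := norm_sub_le _ _
    _ ≤ ‖u b * v b‖ + ‖u a * v a‖ + ‖∫ x in a..b, u' x * v x‖ := by
        have := norm_sub_le (u b * v b) (u a * v a); linarith
    _ ≤ 1 / lam + 1 / lam + 2 / lam := by
        have hb : ‖u b * v b‖ ≤ 1 / lam := by
          rw [norm_mul (u b) (v b), hnv, mul_one]
          exact hbnd_u b ⟨hab, le_refl b⟩
        have ha : ‖u a * v a‖ ≤ 1 / lam := by
          rw [norm_mul (u a) (v a), hnv, mul_one]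
          exact hbnd_u a ⟨le_refl a, hab⟩
        linarith
    _ = 4 / lam := by ring

/-- A continuous nonvanishing function on an interval has constant sign. -/
lemma sign_const (f : ℝ → ℝ) (a b : ℝ) (hc : ContinuousOn f (Icc a b))
    (hne : ∀ x ∈ Icc a b, f x ≠ 0) :
    (∀ x ∈ Icc a b, 0 < f x) ∨ (∀ x ∈ Icc a b, f x < 0) := by
  by_contra h
  push_neg at h
  obtain ⟨⟨x, hx, hxn⟩, ⟨y, hy, hyn⟩⟩ := h
  have hxneg : f x < 0 := lt_of_le_of_ne hxn (hne x hx)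
  have hypos : 0 < f y := lt_of_le_of_ne hyn (Ne.symm (hne y hy))
  have hsub : Set.uIcc x y ⊆ Icc a b := Set.uIcc_subset_Icc hx hy
  have := intermediate_value_uIcc (hc.mono hsub)
  have h0 : (0:ℝ) ∈ Set.uIcc (f x) (f y) := by
    rw [Set.mem_uIcc]
    left; exact ⟨hxneg.le, hypos.le⟩
  obtain ⟨c, hc', hfc⟩ := this h0
  exact hne c (hsub hc') hfc

/-- MVT lower bound: if `f' ≥ mu` on `[a,b]` then `f y - f x ≥ mu (y - x)`. -/
lemma mvt_lower (f f' : ℝ → ℝ) (a b mu : ℝ)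
    (hd : ∀ x ∈ Icc a b, HasDerivAt f (f' x) x)
    (hlow : ∀ x ∈ Icc a b, mu ≤ f' x)
    {x y : ℝ} (hx : x ∈ Icc a b) (hy : y ∈ Icc a b) (hxy : x < y) :
    mu * (y - x) ≤ f y - f x := by
  have hsub : Icc x y ⊆ Icc a b := Icc_subset_Icc hx.1 hy.2
  have hcont : ContinuousOn f (Icc x y) := fun z hz =>
    ((hd z (hsub hz)).continuousAt).continuousWithinAt
  obtain ⟨c, hc, hslope⟩ := exists_hasDerivAt_eq_slope f f' hxy hcont
    (fun z hz => hd z (hsub ⟨hz.1.le, hz.2.le⟩))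
  have hcmem : c ∈ Icc a b := hsub ⟨hc.1.le, hc.2.le⟩
  have := hlow c hcmem
  rw [hslope] at this
  have hpos : 0 < y - x := by linarith
  calc mu * (y - x) ≤ (f y - f x) / (y - x) * (y - x) := by
        apply mul_le_mul_of_nonneg_right this hpos.le
    _ = f y - f x := by field_simp

/-- van der Corput, second derivative, positive case. -/
lemma vdc2_pos (φ φ' φ'' : ℝ → ℝ) (a b mu : ℝ) (hab : a ≤ b) (hmu : 0 < mu)
    (hd1 : ∀ x ∈ Icc a b, HasDerivAt φ (φ' x) x)
    (hd2 : ∀ x ∈ Icc a b, HasDerivAt φ' (φ'' x) x)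
    (hc2 : ContinuousOn φ'' (Icc a b))
    (hlow : ∀ x ∈ Icc a b, mu ≤ φ'' x) :
    ‖∫ x in a..b, Complex.exp (Complex.I * φ x)‖ ≤ 10 / Real.sqrt mu := by
  set δ : ℝ := (Real.sqrt mu)⁻¹ with hδ_def
  have hsq : 0 < Real.sqrt mu := Real.sqrt_pos.2 hmu
  have hδ : 0 < δ := inv_pos.2 hsq
  have hmuδ : mu * δ = Real.sqrt mu := by
    rw [hδ_def]
    calc mu * (Real.sqrt mu)⁻¹ = (Real.sqrt mu * Real.sqrt mu) * (Real.sqrt mu)⁻¹ := by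
          rw [Real.mul_self_sqrt hmu.le]
      _ = Real.sqrt mu := by rw [mul_assoc, mul_inv_cancel₀ hsq.ne', mul_one]
  have hcont : ContinuousOn (fun x => Complex.exp (Complex.I * φ x)) (Icc a b) := by
    apply Complex.continuous_exp.comp_continuousOn
    exact continuous_const.continuousOn.mul (Complex.continuous_ofReal.comp_continuousOn
      (fun x hx => ((hd1 x hx).continuousAt).continuousWithinAt))
  have hint : ∀ c d : ℝ, c ∈ Icc a b → d ∈ Icc a b →
      IntervalIntegrable (fun x => Complex.exp (Complex.I * φ x)) volume c d := by
    intro c d hc hd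
    exact (hcont.mono (Set.uIcc_subset_Icc hc hd)).intervalIntegrable
  -- the key subinterval bound via vdc1
  have hvdc1 : ∀ c d : ℝ, a ≤ c → c ≤ d → d ≤ b →
      (∀ x ∈ Icc c d, Real.sqrt mu ≤ |φ' x|) →
      ‖∫ x in c..d, Complex.exp (Complex.I * φ x)‖ ≤ 4 / Real.sqrt mu := by
    intro c d hac hcd hdb hl
    have hsub : Icc c d ⊆ Icc a b := Icc_subset_Icc hac hdb
    exact vdc1 φ φ' φ'' c d (Real.sqrt mu) hcd hsq
      (fun x hx => hd1 x (hsub hx)) (fun x hx => hd2 x (hsub hx))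
      (hc2.mono hsub) hl
      (Or.inl (fun x hx => le_trans hmu.le (hlow x (hsub hx))))
  have hc1cont : ContinuousOn φ' (Icc a b) :=
    fun x hx => ((hd2 x hx).continuousAt).continuousWithinAt
  have hmono : ∀ {x y : ℝ}, x ∈ Icc a b → y ∈ Icc a b → x < y →
      mu * (y - x) ≤ φ' y - φ' x := fun hx hy hxy => mvt_lower φ' φ'' a b mu hd2 hlow hx hy hxy
  have hfive : (0:ℝ) < 1 / Real.sqrt mu := by positivity
  rcases le_or_gt 0 (φ' a) with h1 | h1
  · -- φ'(a) ≥ 0: phase derivative large after a + δ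
    set p := min b (a + δ) with hp_def
    have hap : a ≤ p := le_min hab (by linarith)
    have hpb : p ≤ b := min_le_left _ _
    have hpmem : p ∈ Icc a b := ⟨hap, hpb⟩
    have hamem : a ∈ Icc a b := ⟨le_refl a, hab⟩
    have hbmem : b ∈ Icc a b := ⟨hab, le_refl b⟩
    rw [← intervalIntegral.integral_add_adjacent_intervals (hint a p hamem hpmem)
      (hint p b hpmem hbmem)]
    have B1 : ‖∫ x in a..p, Complex.exp (Complex.I * φ x)‖ ≤ δ := by
      refine le_trans (triv_bound φ a p hap) ?_
      have : p ≤ a + δ := min_le_right _ _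
      linarith
    have B2 : ‖∫ x in p..b, Complex.exp (Complex.I * φ x)‖ ≤ 4 / Real.sqrt mu := by
      rcases min_cases b (a + δ) with ⟨hpe, hle⟩ | ⟨hpe, hlt⟩
      · rw [hp_def, hpe]
        simp [intervalIntegral.integral_same]
        positivity
      · apply hvdc1 p b hap hpb (le_refl b)
        intro x hx
        have hxa : a + δ ≤ x := by rw [hp_def, hpe] at hx; exact hx.1
        have hxmem : x ∈ Icc a b := ⟨by linarith, hx.2⟩
        have := hmono hamem hxmem (by linarith)
        have hx1 : Real.sqrt mu ≤ φ' x := by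
          have h3 : mu * δ ≤ mu * (x - a) := by
            apply mul_le_mul_of_nonneg_left _ hmu.le
            linarith
          rw [hmuδ] at h3
          linarith
        exact le_trans hx1 (le_abs_self _)
    calc ‖(∫ x in a..p, Complex.exp (Complex.I * φ x)) +
          ∫ x in p..b, Complex.exp (Complex.I * φ x)‖
        ≤ δ + 4 / Real.sqrt mu := le_trans (norm_add_le _ _) (add_le_add B1 B2)
      _ ≤ 10 / Real.sqrt mu := by
          rw [hδ_def, inv_eq_one_div]
          rw [← add_div, div_le_div_iff₀ hsq hsq]
          ring_nf
          nlinarith [hsq]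
  rcases le_or_gt (φ' b) 0 with h2 | h2
  · -- φ'(b) ≤ 0
    set q := max a (b - δ) with hq_def
    have haq : a ≤ q := le_max_left _ _
    have hqb : q ≤ b := max_le hab (by linarith)
    have hqmem : q ∈ Icc a b := ⟨haq, hqb⟩
    have hamem : a ∈ Icc a b := ⟨le_refl a, hab⟩
    have hbmem : b ∈ Icc a b := ⟨hab, le_refl b⟩
    rw [← intervalIntegral.integral_add_adjacent_intervals (hint a q hamem hqmem)
      (hint q b hqmem hbmem)]
    have B2 : ‖∫ x in q..b, Complex.exp (Complex.I * φ x)‖ ≤ δ := by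
      refine le_trans (triv_bound φ q b hqb) ?_
      have : b - δ ≤ q := le_max_right _ _
      linarith
    have B1 : ‖∫ x in a..q, Complex.exp (Complex.I * φ x)‖ ≤ 4 / Real.sqrt mu := by
      rcases max_cases a (b - δ) with ⟨hqe, hle⟩ | ⟨hqe, hlt⟩
      · rw [hq_def, hqe]
        simp [intervalIntegral.integral_same]
        positivity
      · apply hvdc1 a q (le_refl a) haq hqb
        intro x hx
        have hxb : x ≤ b - δ := by rw [hq_def, hqe] at hx; exact hx.2
        have hxmem : x ∈ Icc a b := ⟨hx.1, by linarith⟩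
        have := hmono hxmem hbmem (by linarith)
        have hx1 : φ' x ≤ -Real.sqrt mu := by
          have h3 : mu * δ ≤ mu * (b - x) := by
            apply mul_le_mul_of_nonneg_left _ hmu.le
            linarith
          rw [hmuδ] at h3
          linarith
        calc Real.sqrt mu ≤ -φ' x := by linarith
          _ ≤ |φ' x| := neg_le_abs _
    calc ‖(∫ x in a..q, Complex.exp (Complex.I * φ x)) +
          ∫ x in q..b, Complex.exp (Complex.I * φ x)‖
        ≤ 4 / Real.sqrt mu + δ := le_trans (norm_add_le _ _) (add_le_add B1 B2)
      _ ≤ 10 / Real.sqrt mu := by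
          rw [hδ_def, inv_eq_one_div]
          rw [← add_div, div_le_div_iff₀ hsq hsq]
          nlinarith [hsq]
  · -- φ'(a) < 0 < φ'(b): stationary point inside
    have h0mem : (0:ℝ) ∈ Icc (φ' a) (φ' b) := ⟨h1.le, h2.le⟩
    obtain ⟨c, hcmem, hc0⟩ := intermediate_value_Icc hab hc1cont h0mem
    set p := max a (c - δ) with hp_def
    set q := min b (c + δ) with hq_def
    have hap : a ≤ p := le_max_left _ _
    have hpq : p ≤ q := by
      apply max_le
      · exact le_min hab (by nlinarith [hcmem.1])
      · exact le_min (by nlinarith [hcmem.2]) (by linarith)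
    have hqb : q ≤ b := min_le_left _ _
    have hamem : a ∈ Icc a b := ⟨le_refl a, hab⟩
    have hbmem : b ∈ Icc a b := ⟨hab, le_refl b⟩
    have hpmem : p ∈ Icc a b := ⟨hap, hpq.trans hqb⟩
    have hqmem : q ∈ Icc a b := ⟨hap.trans hpq, hqb⟩
    rw [← intervalIntegral.integral_add_adjacent_intervals (hint a p hamem hpmem)
      (hint p b hpmem hbmem),
      ← intervalIntegral.integral_add_adjacent_intervals (hint p q hpmem hqmem)
      (hint q b hqmem hbmem)]
    have B1 : ‖∫ x in a..p, Complex.exp (Complex.I * φ x)‖ ≤ 4 / Real.sqrt mu := by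
      rcases max_cases a (c - δ) with ⟨hpe, hle⟩ | ⟨hpe, hlt⟩
      · rw [hp_def, hpe]
        simp [intervalIntegral.integral_same]
        positivity
      · apply hvdc1 a p (le_refl a) hap (hpmem.2)
        intro x hx
        have hxc : x ≤ c - δ := by rw [hp_def, hpe] at hx; exact hx.2
        have hxmem : x ∈ Icc a b := ⟨hx.1, le_trans hxc (by nlinarith [hcmem.2])⟩
        have := hmono hxmem hcmem (by linarith)
        rw [hc0] at this
        have hx1 : φ' x ≤ -Real.sqrt mu := by
          have h3 : mu * δ ≤ mu * (c - x) := by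
            apply mul_le_mul_of_nonneg_left _ hmu.le
            linarith
          rw [hmuδ] at h3
          linarith
        calc Real.sqrt mu ≤ -φ' x := by linarith
          _ ≤ |φ' x| := neg_le_abs _
    have B2 : ‖∫ x in p..q, Complex.exp (Complex.I * φ x)‖ ≤ 2 * δ := by
      refine le_trans (triv_bound φ p q hpq) ?_
      have h3 : c - δ ≤ p := le_max_right _ _
      have h4 : q ≤ c + δ := min_le_right _ _
      linarith
    have B3 : ‖∫ x in q..b, Complex.exp (Complex.I * φ x)‖ ≤ 4 / Real.sqrt mu := by
      rcases min_cases b (c + δ) with ⟨hqe, hle⟩ | ⟨hqe, hlt⟩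
      · rw [hq_def, hqe]
        simp [intervalIntegral.integral_same]
        positivity
      · apply hvdc1 q b (hqmem.1) hqb (le_refl b)
        intro x hx
        have hxc : c + δ ≤ x := by rw [hq_def, hqe] at hx; exact hx.1
        have hxmem : x ∈ Icc a b := ⟨le_trans (by nlinarith [hcmem.1]) hxc, hx.2⟩
        have := hmono hcmem hxmem (by linarith)
        rw [hc0] at this
        have hx1 : Real.sqrt mu ≤ φ' x := by
          have h3 : mu * δ ≤ mu * (x - c) := by
            apply mul_le_mul_of_nonneg_left _ hmu.le
            linarith
          rw [hmuδ] at h3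
          linarith
        exact le_trans hx1 (le_abs_self _)
    calc ‖(∫ x in a..p, Complex.exp (Complex.I * φ x)) +
          ((∫ x in p..q, Complex.exp (Complex.I * φ x)) +
            ∫ x in q..b, Complex.exp (Complex.I * φ x))‖
        ≤ 4 / Real.sqrt mu + (2 * δ + 4 / Real.sqrt mu) := by
          refine le_trans (norm_add_le _ _) (add_le_add B1 ?_)
          exact le_trans (norm_add_le _ _) (add_le_add B2 B3)
      _ ≤ 10 / Real.sqrt mu := by
          rw [hδ_def, inv_eq_one_div]
          have h9 : 2 * (1 / Real.sqrt mu) = 2 / Real.sqrt mu := by ring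
          rw [h9, ← add_div, ← add_div, div_le_div_iff₀ hsq hsq]
          nlinarith [hsq]


lemma vdc2 (φ φ' φ'' : ℝ → ℝ) (a b mu : ℝ) (hab : a ≤ b) (hmu : 0 < mu)
    (hd1 : ∀ x ∈ Icc a b, HasDerivAt φ (φ' x) x)
    (hd2 : ∀ x ∈ Icc a b, HasDerivAt φ' (φ'' x) x)
    (hc2 : ContinuousOn φ'' (Icc a b))
    (hlow : ∀ x ∈ Icc a b, mu ≤ |φ'' x|) :
    ‖∫ x in a..b, Complex.exp (Complex.I * φ x)‖ ≤ 10 / Real.sqrt mu := by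
  have hne : ∀ x ∈ Icc a b, φ'' x ≠ 0 := by
    intro x hx h
    have := hlow x hx
    rw [h, abs_zero] at this
    linarith
  rcases sign_const φ'' a b hc2 hne with hpos | hneg
  · apply vdc2_pos φ φ' φ'' a b mu hab hmu hd1 hd2 hc2
    intro x hx
    have := hlow x hx
    rwa [abs_of_pos (hpos x hx)] at this
  · have key : ∀ x : ℝ, Complex.exp (Complex.I * φ x) =
        (starRingEnd ℂ) (Complex.exp (Complex.I * (-φ x : ℝ))) := by
      intro x
      rw [← Complex.exp_conj]
      congr 1
      simp [Complex.conj_I]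
    rw [intervalIntegral.integral_congr (fun x _ => key x), interval_conj, RCLike.norm_conj]
    apply vdc2_pos (fun x => -φ x) (fun x => -φ' x) (fun x => -φ'' x) a b mu hab hmu
      (fun x hx => (hd1 x hx).neg) (fun x hx => (hd2 x hx).neg) hc2.neg
    intro x hx
    have := hlow x hx
    rw [abs_of_neg (hneg x hx)] at this
    linarith

lemma vdc3_pos (φ φ' φ'' φ''' : ℝ → ℝ) (a b mu : ℝ) (hab : a ≤ b) (hmu : 0 < mu)
    (hd1 : ∀ x ∈ Icc a b, HasDerivAt φ (φ' x) x)
    (hd2 : ∀ x ∈ Icc a b, HasDerivAt φ' (φ'' x) x)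
    (hd3 : ∀ x ∈ Icc a b, HasDerivAt φ'' (φ''' x) x)
    (hlow : ∀ x ∈ Icc a b, mu ≤ φ''' x) :
    ‖∫ x in a..b, Complex.exp (Complex.I * φ x)‖ ≤ 22 / mu ^ ((1:ℝ)/3) := by
  set ν : ℝ := mu ^ ((1:ℝ)/3) with hν_def
  have hν : 0 < ν := Real.rpow_pos_of_pos hmu _
  set δ : ℝ := ν⁻¹ with hδ_def
  have hδ : 0 < δ := inv_pos.2 hν
  have hν3 : ν ^ 3 = mu := by
    rw [hν_def, ← Real.rpow_natCast (mu ^ ((1:ℝ)/3)) 3, ← Real.rpow_mul hmu.le]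
    norm_num
  have hmuδ : mu * δ = ν ^ 2 := by
    rw [hδ_def, ← hν3]
    field_simp
  have hsqν : Real.sqrt (ν ^ 2) = ν := Real.sqrt_sq hν.le
  have hc2 : ContinuousOn φ'' (Icc a b) :=
    fun x hx => ((hd3 x hx).continuousAt).continuousWithinAt
  have hcont : ContinuousOn (fun x => Complex.exp (Complex.I * φ x)) (Icc a b) := by
    apply Complex.continuous_exp.comp_continuousOn
    exact continuous_const.continuousOn.mul (Complex.continuous_ofReal.comp_continuousOn
      (fun x hx => ((hd1 x hx).continuousAt).continuousWithinAt))
  have hint : ∀ c d : ℝ, c ∈ Icc a b → d ∈ Icc a b →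
      IntervalIntegrable (fun x => Complex.exp (Complex.I * φ x)) volume c d := by
    intro c d hc hd
    exact (hcont.mono (Set.uIcc_subset_Icc hc hd)).intervalIntegrable
  have hvdc2 : ∀ c d : ℝ, a ≤ c → c ≤ d → d ≤ b →
      (∀ x ∈ Icc c d, ν ^ 2 ≤ |φ'' x|) →
      ‖∫ x in c..d, Complex.exp (Complex.I * φ x)‖ ≤ 10 / ν := by
    intro c d hac hcd hdb hl
    have hsub : Icc c d ⊆ Icc a b := Icc_subset_Icc hac hdb
    have := vdc2 φ φ' φ'' c d (ν ^ 2) hcd (by positivity)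
      (fun x hx => hd1 x (hsub hx)) (fun x hx => hd2 x (hsub hx))
      (hc2.mono hsub) hl
    rwa [hsqν] at this
  have hmono : ∀ {x y : ℝ}, x ∈ Icc a b → y ∈ Icc a b → x < y →
      mu * (y - x) ≤ φ'' y - φ'' x := fun hx hy hxy => mvt_lower φ'' φ''' a b mu hd3 hlow hx hy hxy
  have hc2cont : ContinuousOn φ'' (Icc a b) := hc2
  rcases le_or_gt 0 (φ'' a) with h1 | h1
  · set p := min b (a + δ) with hp_def
    have hap : a ≤ p := le_min hab (by linarith)
    have hpb : p ≤ b := min_le_left _ _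
    have hpmem : p ∈ Icc a b := ⟨hap, hpb⟩
    have hamem : a ∈ Icc a b := ⟨le_refl a, hab⟩
    have hbmem : b ∈ Icc a b := ⟨hab, le_refl b⟩
    rw [← intervalIntegral.integral_add_adjacent_intervals (hint a p hamem hpmem)
      (hint p b hpmem hbmem)]
    have B1 : ‖∫ x in a..p, Complex.exp (Complex.I * φ x)‖ ≤ δ := by
      refine le_trans (triv_bound φ a p hap) ?_
      have : p ≤ a + δ := min_le_right _ _
      linarith
    have B2 : ‖∫ x in p..b, Complex.exp (Complex.I * φ x)‖ ≤ 10 / ν := by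
      rcases min_cases b (a + δ) with ⟨hpe, hle⟩ | ⟨hpe, hlt⟩
      · rw [hp_def, hpe]
        simp [intervalIntegral.integral_same]
        positivity
      · apply hvdc2 p b hap hpb (le_refl b)
        intro x hx
        have hxa : a + δ ≤ x := by rw [hp_def, hpe] at hx; exact hx.1
        have hxmem : x ∈ Icc a b := ⟨by linarith, hx.2⟩
        have := hmono hamem hxmem (by linarith)
        have hx1 : ν ^ 2 ≤ φ'' x := by
          have h3 : mu * δ ≤ mu * (x - a) := by
            apply mul_le_mul_of_nonneg_left _ hmu.le
            linarith
          rw [hmuδ] at h3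
          linarith
        exact le_trans hx1 (le_abs_self _)
    calc ‖(∫ x in a..p, Complex.exp (Complex.I * φ x)) +
          ∫ x in p..b, Complex.exp (Complex.I * φ x)‖
        ≤ δ + 10 / ν := le_trans (norm_add_le _ _) (add_le_add B1 B2)
      _ ≤ 22 / ν := by
          rw [hδ_def, inv_eq_one_div, ← add_div, div_le_div_iff₀ hν hν]
          nlinarith [hν]
  rcases le_or_gt (φ'' b) 0 with h2 | h2
  · set q := max a (b - δ) with hq_def
    have haq : a ≤ q := le_max_left _ _
    have hqb : q ≤ b := max_le hab (by linarith)
    have hqmem : q ∈ Icc a b := ⟨haq, hqb⟩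
    have hamem : a ∈ Icc a b := ⟨le_refl a, hab⟩
    have hbmem : b ∈ Icc a b := ⟨hab, le_refl b⟩
    rw [← intervalIntegral.integral_add_adjacent_intervals (hint a q hamem hqmem)
      (hint q b hqmem hbmem)]
    have B2 : ‖∫ x in q..b, Complex.exp (Complex.I * φ x)‖ ≤ δ := by
      refine le_trans (triv_bound φ q b hqb) ?_
      have : b - δ ≤ q := le_max_right _ _
      linarith
    have B1 : ‖∫ x in a..q, Complex.exp (Complex.I * φ x)‖ ≤ 10 / ν := by
      rcases max_cases a (b - δ) with ⟨hqe, hle⟩ | ⟨hqe, hlt⟩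
      · rw [hq_def, hqe]
        simp [intervalIntegral.integral_same]
        positivity
      · apply hvdc2 a q (le_refl a) haq hqb
        intro x hx
        have hxb : x ≤ b - δ := by rw [hq_def, hqe] at hx; exact hx.2
        have hxmem : x ∈ Icc a b := ⟨hx.1, by linarith⟩
        have := hmono hxmem hbmem (by linarith)
        have hx1 : φ'' x ≤ -(ν ^ 2) := by
          have h3 : mu * δ ≤ mu * (b - x) := by
            apply mul_le_mul_of_nonneg_left _ hmu.le
            linarith
          rw [hmuδ] at h3
          linarith
        calc ν ^ 2 ≤ -φ'' x := by linarith
          _ ≤ |φ'' x| := neg_le_abs _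
    calc ‖(∫ x in a..q, Complex.exp (Complex.I * φ x)) +
          ∫ x in q..b, Complex.exp (Complex.I * φ x)‖
        ≤ 10 / ν + δ := le_trans (norm_add_le _ _) (add_le_add B1 B2)
      _ ≤ 22 / ν := by
          rw [hδ_def, inv_eq_one_div, ← add_div, div_le_div_iff₀ hν hν]
          nlinarith [hν]
  · have h0mem : (0:ℝ) ∈ Icc (φ'' a) (φ'' b) := ⟨h1.le, h2.le⟩
    obtain ⟨c, hcmem, hc0⟩ := intermediate_value_Icc hab hc2cont h0mem
    set p := max a (c - δ) with hp_def
    set q := min b (c + δ) with hq_def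
    have hap : a ≤ p := le_max_left _ _
    have hpq : p ≤ q := by
      apply max_le
      · exact le_min hab (by nlinarith [hcmem.1])
      · exact le_min (by nlinarith [hcmem.2]) (by linarith)
    have hqb : q ≤ b := min_le_left _ _
    have hamem : a ∈ Icc a b := ⟨le_refl a, hab⟩
    have hbmem : b ∈ Icc a b := ⟨hab, le_refl b⟩
    have hpmem : p ∈ Icc a b := ⟨hap, hpq.trans hqb⟩
    have hqmem : q ∈ Icc a b := ⟨hap.trans hpq, hqb⟩
    rw [← intervalIntegral.integral_add_adjacent_intervals (hint a p hamem hpmem)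
      (hint p b hpmem hbmem),
      ← intervalIntegral.integral_add_adjacent_intervals (hint p q hpmem hqmem)
      (hint q b hqmem hbmem)]
    have B1 : ‖∫ x in a..p, Complex.exp (Complex.I * φ x)‖ ≤ 10 / ν := by
      rcases max_cases a (c - δ) with ⟨hpe, hle⟩ | ⟨hpe, hlt⟩
      · rw [hp_def, hpe]
        simp [intervalIntegral.integral_same]
        positivity
      · apply hvdc2 a p (le_refl a) hap (hpmem.2)
        intro x hx
        have hxc : x ≤ c - δ := by rw [hp_def, hpe] at hx; exact hx.2
        have hxmem : x ∈ Icc a b := ⟨hx.1, le_trans hxc (by nlinarith [hcmem.2])⟩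
        have := hmono hxmem hcmem (by linarith)
        rw [hc0] at this
        have hx1 : φ'' x ≤ -(ν ^ 2) := by
          have h3 : mu * δ ≤ mu * (c - x) := by
            apply mul_le_mul_of_nonneg_left _ hmu.le
            linarith
          rw [hmuδ] at h3
          linarith
        calc ν ^ 2 ≤ -φ'' x := by linarith
          _ ≤ |φ'' x| := neg_le_abs _
    have B2 : ‖∫ x in p..q, Complex.exp (Complex.I * φ x)‖ ≤ 2 * δ := by
      refine le_trans (triv_bound φ p q hpq) ?_
      have h3 : c - δ ≤ p := le_max_right _ _
      have h4 : q ≤ c + δ := min_le_right _ _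
      linarith
    have B3 : ‖∫ x in q..b, Complex.exp (Complex.I * φ x)‖ ≤ 10 / ν := by
      rcases min_cases b (c + δ) with ⟨hqe, hle⟩ | ⟨hqe, hlt⟩
      · rw [hq_def, hqe]
        simp [intervalIntegral.integral_same]
        positivity
      · apply hvdc2 q b (hqmem.1) hqb (le_refl b)
        intro x hx
        have hxc : c + δ ≤ x := by rw [hq_def, hqe] at hx; exact hx.1
        have hxmem : x ∈ Icc a b := ⟨le_trans (by nlinarith [hcmem.1]) hxc, hx.2⟩
        have := hmono hcmem hxmem (by linarith)
        rw [hc0] at this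
        have hx1 : ν ^ 2 ≤ φ'' x := by
          have h3 : mu * δ ≤ mu * (x - c) := by
            apply mul_le_mul_of_nonneg_left _ hmu.le
            linarith
          rw [hmuδ] at h3
          linarith
        exact le_trans hx1 (le_abs_self _)
    calc ‖(∫ x in a..p, Complex.exp (Complex.I * φ x)) +
          ((∫ x in p..q, Complex.exp (Complex.I * φ x)) +
            ∫ x in q..b, Complex.exp (Complex.I * φ x))‖
        ≤ 10 / ν + (2 * δ + 10 / ν) := by
          refine le_trans (norm_add_le _ _) (add_le_add B1 ?_)
          exact le_trans (norm_add_le _ _) (add_le_add B2 B3)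
      _ ≤ 22 / ν := by
          rw [hδ_def, inv_eq_one_div]
          have h9 : 2 * (1 / ν) = 2 / ν := by ring
          rw [h9, ← add_div, ← add_div, div_le_div_iff₀ hν hν]
          nlinarith [hν]

lemma vdc3 (φ φ' φ'' φ''' : ℝ → ℝ) (a b mu : ℝ) (hab : a ≤ b) (hmu : 0 < mu)
    (hd1 : ∀ x ∈ Icc a b, HasDerivAt φ (φ' x) x)
    (hd2 : ∀ x ∈ Icc a b, HasDerivAt φ' (φ'' x) x)
    (hd3 : ∀ x ∈ Icc a b, HasDerivAt φ'' (φ''' x) x)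
    (hc3 : ContinuousOn φ''' (Icc a b))
    (hlow : ∀ x ∈ Icc a b, mu ≤ |φ''' x|) :
    ‖∫ x in a..b, Complex.exp (Complex.I * φ x)‖ ≤ 22 / mu ^ ((1:ℝ)/3) := by
  have hne : ∀ x ∈ Icc a b, φ''' x ≠ 0 := by
    intro x hx h
    have := hlow x hx
    rw [h, abs_zero] at this
    linarith
  rcases sign_const φ''' a b hc3 hne with hpos | hneg
  · apply vdc3_pos φ φ' φ'' φ''' a b mu hab hmu hd1 hd2 hd3
    intro x hx
    have := hlow x hx
    rwa [abs_of_pos (hpos x hx)] at this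
  · have key : ∀ x : ℝ, Complex.exp (Complex.I * φ x) =
        (starRingEnd ℂ) (Complex.exp (Complex.I * (-φ x : ℝ))) := by
      intro x
      rw [← Complex.exp_conj]
      congr 1
      simp [Complex.conj_I]
    rw [intervalIntegral.integral_congr (fun x _ => key x), interval_conj, RCLike.norm_conj]
    apply vdc3_pos (fun x => -φ x) (fun x => -φ' x) (fun x => -φ'' x) (fun x => -φ''' x)
      a b mu hab hmu
      (fun x hx => (hd1 x hx).neg) (fun x hx => (hd2 x hx).neg) (fun x hx => (hd3 x hx).neg)
    intro x hx
    have := hlow x hx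
    rw [abs_of_neg (hneg x hx)] at this
    linarith

lemma hcos_quarter (x : ℝ) (hx : |x| ≤ π/4) : (1:ℝ)/2 ≤ Real.cos x := by
  have h1 : Real.cos x = Real.cos |x| := (Real.cos_abs x).symm
  have h2 : Real.cos (π/4) ≤ Real.cos |x| :=
    Real.cos_le_cos_of_nonneg_of_le_pi (abs_nonneg x) (by linarith [Real.pi_gt_three]) hx
  have h3 : (1:ℝ) ≤ Real.sqrt 2 := by
    rw [show (1:ℝ) = Real.sqrt 1 by simp]
    exact Real.sqrt_le_sqrt (by norm_num)
  rw [Real.cos_pi_div_four] at h2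
  rw [h1]
  linarith

section Phase
variable (t : ℝ) (j : ℤ)

noncomputable def ph (ξ : ℝ) : ℝ := (j:ℝ)*ξ - 2*t*(1 - Real.cos ξ)
noncomputable def ph1 (ξ : ℝ) : ℝ := (j:ℝ) - 2*t*Real.sin ξ
noncomputable def ph2 (ξ : ℝ) : ℝ := -(2*t)*Real.cos ξ
noncomputable def ph3 (ξ : ℝ) : ℝ := 2*t*Real.sin ξ

lemma ph_hd1 (ξ : ℝ) : HasDerivAt (ph t j) (ph1 t j ξ) ξ := by
  unfold ph ph1
  have h1 : HasDerivAt (fun x:ℝ => (j:ℝ)*x) (j:ℝ) ξ := by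
    simpa using (hasDerivAt_id ξ).const_mul (j:ℝ)
  have h2 : HasDerivAt (fun x => 2*t*(1 - Real.cos x)) (2*t*Real.sin ξ) ξ := by
    have := ((Real.hasDerivAt_cos ξ).const_sub 1).const_mul (2*t)
    simpa using this
  have := h1.sub h2
  exact this
  try ring

lemma ph_hd2 (ξ : ℝ) : HasDerivAt (ph1 t j) (ph2 t ξ) ξ := by
  unfold ph1 ph2
  have := ((Real.hasDerivAt_sin ξ).const_mul (2*t)).const_sub (j:ℝ)
  rw [show -(2*t)*Real.cos ξ = -(2*t*Real.cos ξ) by ring]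
  exact this

lemma ph_hd3 (ξ : ℝ) : HasDerivAt (ph2 t) (ph3 t ξ) ξ := by
  unfold ph2 ph3
  have := (Real.hasDerivAt_cos ξ).const_mul (-(2*t))
  rw [show 2*t*Real.sin ξ = -(2*t) * -Real.sin ξ by ring]
  exact this

lemma ph_cont : Continuous (fun ξ => Complex.exp (Complex.I * (ph t j ξ : ℝ))) := by
  apply Complex.continuous_exp.comp
  apply continuous_const.mul
  apply Complex.continuous_ofReal.comp
  unfold ph
  continuity

end Phase

lemma main_bound (t : ℝ) (j : ℤ) (ht : 1 ≤ |t|) :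
    ‖∫ ξ in (-π)..π, Complex.exp (Complex.I * (ph t j ξ : ℝ))‖ ≤ 74 / |t| ^ ((1:ℝ)/3) := by
  have hpi := Real.pi_gt_three
  have htpos : (0:ℝ) < |t| := by linarith
  have hT : (0:ℝ) < |t| ^ ((1:ℝ)/3) := Real.rpow_pos_of_pos htpos _
  have hint : ∀ c d : ℝ, IntervalIntegrable
      (fun ξ => Complex.exp (Complex.I * (ph t j ξ : ℝ))) volume c d :=
    fun c d => (ph_cont t j).intervalIntegrable c d
  have hd1 := fun (x : ℝ) (_ : True) => ph_hd1 t j x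
  -- general vdc2 application on an interval where |cos| ≥ 1/2
  have happ2 : ∀ c d : ℝ, c ≤ d → (∀ x ∈ Icc c d, (1:ℝ)/2 ≤ |Real.cos x|) →
      ‖∫ ξ in c..d, Complex.exp (Complex.I * (ph t j ξ : ℝ))‖ ≤ 10 / |t| ^ ((1:ℝ)/3) := by
    intro c d hcd hcos
    have h := vdc2 (ph t j) (ph1 t j) (ph2 t) c d (|t|) hcd htpos
      (fun x _ => ph_hd1 t j x) (fun x _ => ph_hd2 t j x)
      (by unfold ph2; fun_prop)
      (by
        intro x hx
        unfold ph2
        rw [abs_mul, abs_neg, abs_mul]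
        have := hcos x hx
        have h2 : |(2:ℝ)| = 2 := by norm_num
        rw [h2]
        nlinarith [abs_nonneg t, abs_nonneg (Real.cos x)])
    refine le_trans h ?_
    -- 10 / sqrt |t| ≤ 10 / |t|^(1/3)
    rw [Real.sqrt_eq_rpow]
    apply div_le_div_of_nonneg_left (by norm_num) hT
    exact Real.rpow_le_rpow_of_exponent_le ht (by norm_num)
  have happ3 : ∀ c d : ℝ, c ≤ d → (∀ x ∈ Icc c d, (1:ℝ)/2 ≤ |Real.sin x|) →
      ‖∫ ξ in c..d, Complex.exp (Complex.I * (ph t j ξ : ℝ))‖ ≤ 22 / |t| ^ ((1:ℝ)/3) := by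
    intro c d hcd hsin
    exact vdc3 (ph t j) (ph1 t j) (ph2 t) (ph3 t) c d (|t|) hcd htpos
      (fun x _ => ph_hd1 t j x) (fun x _ => ph_hd2 t j x) (fun x _ => ph_hd3 t x)
      (by unfold ph3; fun_prop)
      (by
        intro x hx
        unfold ph3
        rw [abs_mul, abs_mul]
        have := hsin x hx
        have h2 : |(2:ℝ)| = 2 := by norm_num
        rw [h2]
        nlinarith [abs_nonneg t, abs_nonneg (Real.sin x)])
  -- split the interval
  have s1 : -π ≤ -(3*π/4) := by linarith
  have s2 : -(3*π/4) ≤ -(π/4) := by linarith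
  have s3 : -(π/4) ≤ π/4 := by linarith
  have s4 : (π/4) ≤ 3*π/4 := by linarith
  have s5 : 3*π/4 ≤ π := by linarith
  rw [← intervalIntegral.integral_add_adjacent_intervals (hint (-π) (-(3*π/4))) (hint (-(3*π/4)) π),
      ← intervalIntegral.integral_add_adjacent_intervals (hint (-(3*π/4)) (-(π/4))) (hint (-(π/4)) π),
      ← intervalIntegral.integral_add_adjacent_intervals (hint (-(π/4)) (π/4)) (hint (π/4) π),
      ← intervalIntegral.integral_add_adjacent_intervals (hint (π/4) (3*π/4)) (hint (3*π/4) π)]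
  have B1 : ‖∫ ξ in (-π)..(-(3*π/4)), Complex.exp (Complex.I * (ph t j ξ : ℝ))‖
      ≤ 10 / |t| ^ ((1:ℝ)/3) := by
    apply happ2 _ _ s1
    intro x hx
    have h1 : Real.cos (x + π) = -Real.cos x := Real.cos_add_pi x
    have h2 : |x + π| ≤ π/4 := by
      rw [abs_le]; constructor <;> [linarith [hx.1]; linarith [hx.2]]
    have := hcos_quarter (x + π) h2
    rw [h1] at this
    calc (1:ℝ)/2 ≤ -Real.cos x := this
      _ ≤ |Real.cos x| := neg_le_abs _
  have B2 : ‖∫ ξ in (-(3*π/4))..(-(π/4)), Complex.exp (Complex.I * (ph t j ξ : ℝ))‖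
      ≤ 22 / |t| ^ ((1:ℝ)/3) := by
    apply happ3 _ _ s2
    intro x hx
    have h1 : Real.cos (x + π/2) = -Real.sin x := Real.cos_add_pi_div_two x
    have h2 : |x + π/2| ≤ π/4 := by
      rw [abs_le]; constructor <;> [linarith [hx.1]; linarith [hx.2]]
    have := hcos_quarter (x + π/2) h2
    rw [h1] at this
    calc (1:ℝ)/2 ≤ -Real.sin x := this
      _ ≤ |Real.sin x| := neg_le_abs _
  have B3 : ‖∫ ξ in (-(π/4))..(π/4), Complex.exp (Complex.I * (ph t j ξ : ℝ))‖
      ≤ 10 / |t| ^ ((1:ℝ)/3) := by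
    apply happ2 _ _ s3
    intro x hx
    have h2 : |x| ≤ π/4 := by
      rw [abs_le]; exact ⟨hx.1, hx.2⟩
    exact le_trans (hcos_quarter x h2) (le_abs_self _)
  have B4 : ‖∫ ξ in (π/4)..(3*π/4), Complex.exp (Complex.I * (ph t j ξ : ℝ))‖
      ≤ 22 / |t| ^ ((1:ℝ)/3) := by
    apply happ3 _ _ s4
    intro x hx
    have h1 : Real.cos (x - π/2) = Real.sin x := Real.cos_sub_pi_div_two x
    have h2 : |x - π/2| ≤ π/4 := by
      rw [abs_le]; constructor <;> [linarith [hx.1]; linarith [hx.2]]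
    have := hcos_quarter (x - π/2) h2
    rw [h1] at this
    exact le_trans this (le_abs_self _)
  have B5 : ‖∫ ξ in (3*π/4)..π, Complex.exp (Complex.I * (ph t j ξ : ℝ))‖
      ≤ 10 / |t| ^ ((1:ℝ)/3) := by
    apply happ2 _ _ s5
    intro x hx
    have h1 : Real.cos (x - π) = -Real.cos x := Real.cos_sub_pi x
    have h2 : |x - π| ≤ π/4 := by
      rw [abs_le]; constructor <;> [linarith [hx.1]; linarith [hx.2]]
    have := hcos_quarter (x - π) h2
    rw [h1] at this
    calc (1:ℝ)/2 ≤ -Real.cos x := this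
      _ ≤ |Real.cos x| := neg_le_abs _
  have total : ‖(∫ ξ in (-π)..(-(3*π/4)), Complex.exp (Complex.I * (ph t j ξ : ℝ))) +
      ((∫ ξ in (-(3*π/4))..(-(π/4)), Complex.exp (Complex.I * (ph t j ξ : ℝ))) +
        ((∫ ξ in (-(π/4))..(π/4), Complex.exp (Complex.I * (ph t j ξ : ℝ))) +
          ((∫ ξ in (π/4)..(3*π/4), Complex.exp (Complex.I * (ph t j ξ : ℝ))) +
            (∫ ξ in (3*π/4)..π, Complex.exp (Complex.I * (ph t j ξ : ℝ))))))‖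
      ≤ 10 / |t| ^ ((1:ℝ)/3) + (22 / |t| ^ ((1:ℝ)/3) + (10 / |t| ^ ((1:ℝ)/3) +
          (22 / |t| ^ ((1:ℝ)/3) + 10 / |t| ^ ((1:ℝ)/3)))) := by
    refine le_trans (norm_add_le _ _) (add_le_add B1 ?_)
    refine le_trans (norm_add_le _ _) (add_le_add B2 ?_)
    refine le_trans (norm_add_le _ _) (add_le_add B3 ?_)
    exact le_trans (norm_add_le _ _) (add_le_add B4 B5)
  refine le_trans total (le_of_eq (by ring))

/-- Uniform `(1+|t|)^{-1/3}` decay of the discrete Schrödinger kernel. -/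
theorem discrete_schrodinger_kernel_decay :
    ∃ C > 0, ∀ (t : ℝ) (j : ℤ),
      ‖schrodingerKernel t j‖ ≤ C * (1 + |t|) ^ (-(1 / 3 : ℝ)) := by
  refine ⟨100, by norm_num, ?_⟩
  intro t j
  have hpi := Real.pi_gt_three
  have hpipos := Real.pi_pos
  have habs : (0:ℝ) ≤ |t| := abs_nonneg t
  -- rewrite the kernel
  have hker : schrodingerKernel t j =
      (1 / (2 * (π:ℂ))) * ∫ ξ in (-π)..π, Complex.exp (Complex.I * (ph t j ξ : ℝ)) := by
    unfold schrodingerKernel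
    congr 1
    apply intervalIntegral.integral_congr
    intro ξ _
    show Complex.exp (-4 * Complex.I * (t:ℂ) * ((Real.sin (ξ / 2) : ℂ)) ^ 2) *
      Complex.exp (Complex.I * (j:ℂ) * (ξ:ℂ)) = Complex.exp (Complex.I * (ph t j ξ : ℝ))
    rw [← Complex.exp_add]
    congr 1
    have hr : Real.sin (ξ/2)^2 = 1/2 - Real.cos ξ/2 := by
      have := Real.sin_sq_eq_half_sub (ξ/2)
      rwa [show 2*(ξ/2) = ξ by ring] at this
    rw [← Complex.ofReal_pow, hr]
    unfold ph
    push_cast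
    ring
  have hnormc : ‖(1 / (2 * (π:ℂ)))‖ = 1 / (2*π) := by
    rw [norm_div, norm_one, norm_mul]
    simp [abs_of_pos hpipos]
  rw [hker, norm_mul, hnormc]
  have hrhs : (1 + |t|) ^ (-(1/3 : ℝ)) = ((1 + |t|) ^ ((1:ℝ)/3))⁻¹ := by
    rw [← Real.rpow_neg (by linarith)]
    try norm_num
  rcases le_total (|t|) 1 with hsmall | hbig
  · -- small time: trivial bound
    have h1 : ‖∫ ξ in (-π)..π, Complex.exp (Complex.I * (ph t j ξ : ℝ))‖ ≤ 2*π := by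
      have := triv_bound (ph t j) (-π) π (by linarith)
      linarith
    have h2 : 1/(2*π) * ‖∫ ξ in (-π)..π, Complex.exp (Complex.I * (ph t j ξ : ℝ))‖ ≤ 1 := by
      have h3 : 1/(2*π) * ‖∫ ξ in (-π)..π, Complex.exp (Complex.I * (ph t j ξ : ℝ))‖
          ≤ 1/(2*π) * (2*π) := by
        apply mul_le_mul_of_nonneg_left h1 (by positivity)
      rwa [one_div_mul_cancel (by positivity)] at h3
    refine le_trans h2 ?_
    have h4 : (2:ℝ) ^ (-(1/3):ℝ) ≤ (1 + |t|) ^ (-(1/3):ℝ) :=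
      Real.rpow_le_rpow_of_nonpos (by linarith) (by linarith) (by norm_num)
    have h5 : (2:ℝ) ^ (-1:ℝ) ≤ (2:ℝ) ^ (-(1/3):ℝ) :=
      Real.rpow_le_rpow_of_exponent_le one_le_two (by norm_num)
    rw [Real.rpow_neg_one] at h5
    nlinarith [h4, h5]
  · -- large time
    set T : ℝ := |t| ^ ((1:ℝ)/3) with hT_def
    set S : ℝ := (1 + |t|) ^ ((1:ℝ)/3) with hS_def
    have hT : 0 < T := Real.rpow_pos_of_pos (by linarith) _
    have hS : 0 < S := Real.rpow_pos_of_pos (by linarith) _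
    have hmain := main_bound t j hbig
    have hS2T : S ≤ 2 * T := by
      have e1 : S ≤ (2*|t|) ^ ((1:ℝ)/3) :=
        Real.rpow_le_rpow (by linarith) (by linarith) (by norm_num)
      have e2 : ((2:ℝ)*|t|) ^ ((1:ℝ)/3) = (2:ℝ)^((1:ℝ)/3) * T := by
        rw [hT_def, ← Real.mul_rpow (by norm_num) habs]
      have e3 : (2:ℝ)^((1:ℝ)/3) ≤ 2 := by
        have := Real.rpow_le_rpow_of_exponent_le (x := 2) one_le_two
          (show (1:ℝ)/3 ≤ 1 by norm_num)
        rwa [Real.rpow_one] at this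
      calc S ≤ (2*|t|) ^ ((1:ℝ)/3) := e1
        _ = (2:ℝ)^((1:ℝ)/3) * T := e2
        _ ≤ 2 * T := mul_le_mul_of_nonneg_right e3 hT.le
    have step1 : 1/(2*π) * ‖∫ ξ in (-π)..π, Complex.exp (Complex.I * (ph t j ξ : ℝ))‖
        ≤ 1/(2*π) * (74 / T) := mul_le_mul_of_nonneg_left hmain (by positivity)
    refine le_trans step1 ?_
    rw [hrhs]
    have e : 1/(2*π) * (74 / T) = 74 / (2*π*T) := by
      field_simp
    rw [e, show (100:ℝ) * S⁻¹ = 100 / S by rw [div_eq_mul_inv],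
      div_le_div_iff₀ (by positivity) hS]
    nlinarith [hT, hS, hS2T]
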